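/- Let P be a finite p-group whose rank equals the rank of its center, and let P be a subgroup of a finite group G. Then Ω₁(Z(P)) is strongly closed in P with respect to G, i.e. for every g ∈ G, g·Ω₁(Z(P))·g⁻¹ ∩ P ⊆ Ω₁(Z(P)). -/

import Mathlib

/-- A subgroup is elementary abelian for the prime `p` if it is commutative and
every element has order dividing `p`. -/
def IsElementaryAbelian (p : ℕ) {G : Type*} [Group G] (H : Subgroup G) : Prop :=
  (∀ x ∈ H, ∀ y ∈ H, x * y = y * x) ∧ ∀ x ∈ H, x ^ p = 1

/-- `Ω₁(H)`: the subgroup generated by the elements of `H` of order dividing `p`. -/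
def Omega1 (p : ℕ) {G : Type*} [Group G] (H : Subgroup G) : Subgroup G :=
  Subgroup.closure {x : G | x ∈ H ∧ x ^ p = 1}

/-- The `p`-rank of a group. -/
noncomputable def pRank (p : ℕ) (G : Type*) [Group G] : ℕ :=
  sSup {n | ∃ E : Subgroup G, IsElementaryAbelian p E ∧ Nat.card E = p ^ n}

/-- `H` is strongly closed in `K` with respect to `G`: for each `g ∈ G`,
`gHg⁻¹ ∩ K ⊆ H`. -/
def IsStronglyClosed {G : Type*} [Group G] (H K : Subgroup G) : Prop :=
  ∀ g x : G, x ∈ H → g * x * g⁻¹ ∈ K → g * x * g⁻¹ ∈ H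

/-- Membership in `Ω₁(Z(G))` is equivalent to being central of order dividing `p`. -/
lemma mem_omega1_center {p : ℕ} {G : Type*} [Group G] {x : G} :
    x ∈ Omega1 p (Subgroup.center G) ↔ x ∈ Subgroup.center G ∧ x ^ p = 1 := by
  constructor
  · intro hx
    induction hx using Subgroup.closure_induction with
    | mem z hz => exact hz
    | one => exact ⟨Subgroup.one_mem _, one_pow p⟩
    | mul a b ha hb iha ihb =>
      refine ⟨Subgroup.mul_mem _ iha.1 ihb.1, ?_⟩
      have hc : Commute a b := (Subgroup.mem_center_iff.mp iha.1 b).symm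
      rw [hc.mul_pow, iha.2, ihb.2, one_mul]
    | inv a ha iha =>
      exact ⟨Subgroup.inv_mem _ iha.1, by rw [inv_pow, iha.2, inv_one]⟩
  · intro hx
    exact Subgroup.subset_closure hx

lemma omega1_le_center {p : ℕ} {G : Type*} [Group G] :
    Omega1 p (Subgroup.center G) ≤ Subgroup.center G := fun _ hx =>
  (mem_omega1_center.mp hx).1

/-- The key lemma: if rk(P) = rk(Z(P)) for a finite p-group P, then every element
of order dividing p is central. -/
lemma central_of_pow_eq_one {p : ℕ} [Fact p.Prime] {P : Type*} [Group P] [Finite P]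
    (hP : IsPGroup p P)
    (hrk : pRank p P = pRank p (Subgroup.center P))
    (y : P) (hy : y ^ p = 1) : y ∈ Subgroup.center P := by
  classical
  have hp1 : 1 < p := (Fact.out : p.Prime).one_lt
  by_contra hyc
  set Q : Subgroup P := Omega1 p (Subgroup.center P) with hQ
  obtain ⟨m, hm⟩ := (IsPGroup.iff_card.mp (hP.to_subgroup Q))
  set E : Subgroup P := Subgroup.closure ((Q : Set P) ∪ {y}) with hE
  have hQE : Q ≤ E := fun a ha => Subgroup.subset_closure (Set.mem_union_left _ ha)
  have hyE : y ∈ E := Subgroup.subset_closure (Set.mem_union_right _ rfl)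
  have hyQ : y ∉ Q := fun h => hyc (mem_omega1_center.mp h).1
  -- E is abelian
  have hcomm : ∀ a ∈ E, ∀ b ∈ E, a * b = b * a := by
    intro a ha b hb
    induction ha, hb using Subgroup.closure_induction₂ with
    | mem u v hu hv =>
      rcases hu with hu | hu
      · exact (Subgroup.mem_center_iff.mp (omega1_le_center hu) v).symm
      · rcases hv with hv | hv
        · exact Subgroup.mem_center_iff.mp (omega1_le_center hv) u
        · rw [Set.mem_singleton_iff.mp hu, Set.mem_singleton_iff.mp hv]
    | one_left x hx => rw [one_mul, mul_one]
    | one_right x hx => rw [one_mul, mul_one]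
    | mul_left x y' z hx hy' hz h1 h2 => rw [mul_assoc, h2, ← mul_assoc, h1, mul_assoc]
    | mul_right y' z x hy' hz hx h1 h2 => rw [← mul_assoc, h1, mul_assoc, h2, ← mul_assoc]
    | inv_left x y' hx hy' h => exact (Commute.inv_left h).eq
    | inv_right x y' hx hy' h => exact (Commute.inv_right h).eq
  -- every element of E has order dividing p
  have hpow : ∀ a ∈ E, a ^ p = 1 := by
    intro a ha
    induction ha using Subgroup.closure_induction with
    | mem z hz =>
      rcases hz with hz | hz
      · exact (mem_omega1_center.mp hz).2
      · rw [Set.mem_singleton_iff.mp hz]; exact hy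
    | one => exact one_pow p
    | mul a b ha hb iha ihb =>
      have hc : Commute a b := hcomm a ha b hb
      rw [hc.mul_pow, iha, ihb, one_mul]
    | inv a ha iha => rw [inv_pow, iha, inv_one]
  obtain ⟨k, hk⟩ := (IsPGroup.iff_card.mp (hP.to_subgroup E))
  -- card Q < card E
  have hlt : Nat.card Q < Nat.card E := by
    have e1 : Nat.card Q = (Q : Set P).ncard := by
      rw [← Nat.card_coe_set_eq]; rfl
    have e2 : Nat.card E = (E : Set P).ncard := by
      rw [← Nat.card_coe_set_eq]; rfl
    rw [e1, e2]
    exact Set.ncard_lt_ncard ⟨hQE, fun h => hyQ (h hyE)⟩ (Set.toFinite _)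
  rw [hm, hk] at hlt
  have hmk : m < k := (pow_lt_pow_iff_right₀ hp1).mp hlt
  -- pRank P ≥ k
  have hbdd : BddAbove {n | ∃ E' : Subgroup P, IsElementaryAbelian p E' ∧ Nat.card E' = p ^ n} := by
    refine ⟨Nat.card P, fun n hn => ?_⟩
    obtain ⟨E', _, hE'⟩ := hn
    have h1 : p ^ n ≤ Nat.card P := hE' ▸ Subgroup.card_le_card_group E'
    exact le_trans (Nat.le_of_lt (Nat.lt_pow_self hp1 : n < p ^ n)) h1
  have hEelem : IsElementaryAbelian p E := ⟨hcomm, hpow⟩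
  have hkle : k ≤ pRank p P := le_csSup hbdd ⟨E, hEelem, hk⟩
  -- pRank Z ≤ m
  have hZle : pRank p (Subgroup.center P) ≤ m := by
    refine csSup_le ⟨0, ⊥, ⟨fun x hx y' hy' => by
        rw [Subgroup.mem_bot.mp hx, Subgroup.mem_bot.mp hy'],
        fun x hx => by rw [Subgroup.mem_bot.mp hx, one_pow]⟩, by simp⟩ ?_
    rintro n ⟨E', hE'elem, hE'card⟩
    have hmap : Subgroup.map (Subgroup.center P).subtype E' ≤ Q := by
      rintro z ⟨e, he, rfl⟩
      refine mem_omega1_center.mpr ⟨e.2, ?_⟩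
      have := hE'elem.2 e he
      exact congrArg ((Subgroup.center P).subtype) this
    have hcard : Nat.card (Subgroup.map (Subgroup.center P).subtype E') = p ^ n := by
      rw [← hE'card]
      exact (Nat.card_congr (Subgroup.equivMapOfInjective E' _
        (Subgroup.center P).subtype_injective).toEquiv).symm
    have h1 : p ^ n ≤ p ^ m := by
      rw [← hcard, ← hm]
      exact Subgroup.card_le_of_le hmap
    exact (pow_le_pow_iff_right₀ hp1).mp h1
  omega

theorem stmt_2 {p : ℕ} [Fact p.Prime] {G : Type*} [Group G] [Finite G]
    (P : Subgroup G) (hP : IsPGroup p P)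
    (hrk : pRank p P = pRank p (Subgroup.center P)) :
    IsStronglyClosed (Subgroup.map P.subtype (Omega1 p (Subgroup.center P))) P := by
  intro g x hx hgx
  obtain ⟨x', hx', rfl⟩ := hx
  obtain ⟨hxc, hxp⟩ := mem_omega1_center.mp hx'
  set y : P := ⟨g * ↑x' * g⁻¹, hgx⟩ with hy
  have hxp' : (↑x' : G) ^ p = 1 := by
    have := congrArg (P.subtype) hxp
    simpa using this
  have hyp : y ^ p = 1 := by
    ext
    show (g * ↑x' * g⁻¹) ^ p = 1
    rw [conj_pow, hxp', mul_one, mul_inv_cancel]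
  have hyc := central_of_pow_eq_one hP hrk y hyp
  exact ⟨y, mem_omega1_center.mpr ⟨hyc, hyp⟩, rfl⟩
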